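/- Let a ∈ ℂ be nonzero, and define f_a : ℤ → ℂ by f_a(i) = a^i / (|i| + 1). Define weights w : ℤ → ℂ by w(n) = (|n| + 1)/|n| if n < 0 and w(n) = (n + 1)/(n + 2) if n ≥ 0. Then for every n ∈ ℤ, w(n − 1) · f_a(n − 1) = a⁻¹ · f_a(n); that is, f_a is an eigenvector of the weighted shift operator X̃_ℤ (which maps the basis vector at n to w(n) times the basis vector at n+1) with eigenvalue a⁻¹. -/

import Mathlib

/-- For nonzero `a ∈ ℂ`, the function `f_a(i) = a^i / (|i| + 1)` satisfies
`w(n−1) · f_a(n−1) = a⁻¹ · f_a(n)` for all `n ∈ ℤ`, where `w` are the weights of the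
weighted shift operator `X̃_ℤ`; that is, `f_a` is an eigenvector of `X̃_ℤ` with
eigenvalue `a⁻¹`. -/
theorem fa_eigenvector_weighted_shift (a : ℂ) (ha : a ≠ 0)
    (f w : ℤ → ℂ)
    (hf : ∀ i : ℤ, f i = a ^ i / (((|i| : ℤ) : ℂ) + 1))
    (hw : ∀ n : ℤ, w n = if n < 0 then (((|n| : ℤ) : ℂ) + 1) / ((|n| : ℤ) : ℂ)
      else ((n : ℂ) + 1) / ((n : ℂ) + 2)) :
    ∀ n : ℤ, w (n - 1) * f (n - 1) = a⁻¹ * f n := by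
  intro n
  rw [hf, hf, hw]
  have hz : a ^ (n - 1) = a ^ n * a⁻¹ := by
    rw [zpow_sub₀ ha, zpow_one, div_eq_mul_inv]
  rcases le_or_gt n 0 with h | h
  · have h1 : n - 1 < 0 := by omega
    have habs1 : |n - 1| = 1 - n := abs_of_nonpos (by omega)|>.trans (by ring)
    have habs : |n| = -n := abs_of_nonpos h
    rw [if_pos h1, habs1, habs, hz]
    have hc1 : ((((1 : ℤ) - n : ℤ) : ℂ)) ≠ 0 :=
      Int.cast_ne_zero.mpr (by omega)
    have hc2 : (((1 : ℤ) - n : ℤ) : ℂ) + 1 ≠ 0 := by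
      intro hh
      exact Int.cast_ne_zero.mpr (show (2 : ℤ) - n ≠ 0 by omega)
        (show (((2 : ℤ) - n : ℤ) : ℂ) = 0 by push_cast at hh ⊢; linear_combination hh)
    have hc3 : ((-n : ℤ) : ℂ) + 1 ≠ 0 := by
      intro hh
      exact hc1 (by push_cast at hh ⊢; linear_combination hh)
    push_cast at hc1 hc2 hc3 ⊢
    field_simp
    ring
  · have h1 : ¬ (n - 1 < 0) := by omega
    have habs1 : |n - 1| = n - 1 := abs_of_nonneg (by omega)
    have habs : |n| = n := abs_of_nonneg (by omega)
    rw [if_neg h1, habs1, habs, hz]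
    have hc1 : ((n : ℤ) : ℂ) ≠ 0 := Int.cast_ne_zero.mpr (by omega)
    have hc2 : ((n : ℤ) : ℂ) + 1 ≠ 0 := by
      intro hh
      exact Int.cast_ne_zero.mpr (show (n : ℤ) + 1 ≠ 0 by omega)
        (show (((n : ℤ) + 1 : ℤ) : ℂ) = 0 by push_cast at hh ⊢; linear_combination hh)
    push_cast at hc1 hc2 ⊢
    have hy : (n : ℂ) * a + (n : ℂ) ^ 2 * a ≠ 0 := by
      have he : (n : ℂ) * a + (n : ℂ) ^ 2 * a = (n : ℂ) * ((n : ℂ) + 1) * a := by ring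
      rw [he]
      exact mul_ne_zero (mul_ne_zero hc1 hc2) ha
    field_simp
    rw [div_eq_iff (mul_ne_zero (show (n:ℂ) - 1 + 1 ≠ 0 by
      intro hh; exact hc1 (by linear_combination hh)) (show (n:ℂ) - 1 + 2 ≠ 0 by
      intro hh; exact hc2 (by linear_combination hh)))]
    ring
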